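/- For each integer μ ≥ 1, let v_μ = (−cos(π·2^{-μ}), sin(π·2^{-μ})), and let s_μ = (sin(π·2^{-μ}) − sin(π·2^{-μ-1})) / (cos(π·2^{-μ-1}) − cos(π·2^{-μ})) be the slope of the segment joining v_μ and v_{μ+1}. Then for every μ ≥ 1, one has 2^{μ-3} ≤ s_μ ≤ 2^{μ}. In particular, the slopes of the edges of the lacunary polygon in the second quadrant are positive, bounded away from zero, and grow geometrically in μ. -/

import Mathlib

open Real

/-- The slope `s_μ` of the segment joining the lacunary polygon vertices
`v_μ = (−cos(π 2^{-μ}), sin(π 2^{-μ}))` and `v_{μ+1}`. -/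
noncomputable def edgeSlope (μ : ℕ) : ℝ :=
  (Real.sin (π * 2 ^ (-(μ : ℤ))) - Real.sin (π * 2 ^ (-(μ : ℤ) - 1))) /
    (Real.cos (π * 2 ^ (-(μ : ℤ) - 1)) - Real.cos (π * 2 ^ (-(μ : ℤ))))

/-- The slopes of the edges of the lacunary polygon in the second quadrant
satisfy `2^{μ-3} ≤ s_μ ≤ 2^μ` for all `μ ≥ 1`. -/
theorem edgeSlope_bounds (μ : ℕ) (hμ : 1 ≤ μ) :
    (2 : ℝ) ^ ((μ : ℝ) - 3) ≤ edgeSlope μ ∧ edgeSlope μ ≤ (2 : ℝ) ^ (μ : ℝ) := by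
  have hpi := Real.pi_pos
  set θ : ℝ := π / 2 ^ (μ + 1) with hθdef
  have h2pow : ∀ n : ℕ, (0:ℝ) < 2 ^ n := fun n => by positivity
  have hz1 : π * (2:ℝ) ^ (-(μ : ℤ) - 1) = θ := by
    rw [hθdef, show (-(μ:ℤ) - 1) = -((μ:ℕ)+1 : ℕ) by push_cast; ring,
      zpow_neg, zpow_natCast, div_eq_mul_inv]
  have hz0 : π * (2:ℝ) ^ (-(μ : ℤ)) = 2 * θ := by
    rw [hθdef, zpow_neg, zpow_natCast]
    rw [pow_succ]
    field_simp
  have hθpos : 0 < θ := by positivity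
  have hθle : θ ≤ π / 4 := by
    rw [hθdef, div_le_div_iff₀ (h2pow _) (by norm_num)]
    have : (4:ℝ) ≤ 2 ^ (μ + 1) := by
      calc (4:ℝ) = 2 ^ 2 := by norm_num
      _ ≤ 2 ^ (μ + 1) := by
        apply pow_le_pow_right₀ (by norm_num); omega
    nlinarith
  set β : ℝ := 3 * θ / 2 with hβdef
  have hβpos : 0 < β := by positivity
  have hβle : β ≤ 3 * π / 8 := by rw [hβdef]; linarith
  have hβlt : β < π / 2 := by nlinarith
  have hsinβpos : 0 < Real.sin β := Real.sin_pos_of_pos_of_lt_pi hβpos (by nlinarith)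
  have hhalfpos : 0 < Real.sin (θ / 2) :=
    Real.sin_pos_of_pos_of_lt_pi (by positivity) (by nlinarith)
  -- rewrite edgeSlope as cos β / sin β
  have hslope : edgeSlope μ = Real.cos β / Real.sin β := by
    unfold edgeSlope
    rw [hz0, hz1, Real.sin_sub_sin, Real.cos_sub_cos]
    have e1 : (2*θ - θ) / 2 = θ / 2 := by ring
    have e2 : (2*θ + θ) / 2 = β := by rw [hβdef]; ring
    have e3 : (θ + 2*θ) / 2 = β := by rw [hβdef]; ring
    have e4 : (θ - 2*θ) / 2 = -(θ/2) := by ring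
    rw [e1, e2, e3, e4, Real.sin_neg]
    field_simp
  -- key value of β * 2^μ
  have hβmul : β * 2 ^ μ = 3 * π / 4 := by
    rw [hβdef, hθdef, pow_succ]
    field_simp
    ring
  have hrpow : (2:ℝ) ^ ((μ:ℝ)) = (2:ℝ) ^ μ := by
    rw [← Real.rpow_natCast 2 μ]
  have hrpow3 : (2:ℝ) ^ ((μ:ℝ) - 3) = (2:ℝ) ^ μ / 8 := by
    rw [Real.rpow_sub (by norm_num), hrpow]; norm_num
  constructor
  · -- lower bound
    rw [hslope, hrpow3, div_le_div_iff₀ (by norm_num) hsinβpos]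
    have hsinle : Real.sin β ≤ β := Real.sin_le hβpos.le
    have hcos : 1 - β ^ 2 / 2 ≤ Real.cos β := Real.one_sub_sq_div_two_le_cos
    have hpi315 : π < 3.15 := Real.pi_lt_d2
    -- need 2^μ * sin β ≤ cos β * 8
    have h1 : (2:ℝ) ^ μ * Real.sin β ≤ 2 ^ μ * β := by
      nlinarith [h2pow μ]
    have h2 : (2:ℝ) ^ μ * β = 3 * π / 4 := by rw [mul_comm]; exact hβmul
    have h3 : (8:ℝ) * (1 - β ^ 2 / 2) ≤ 8 * Real.cos β := by linarith
    have h4 : 3 * π / 4 ≤ 8 * (1 - β ^ 2 / 2) := by nlinarith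
    linarith
  · -- upper bound
    rw [hslope, hrpow, div_le_iff₀ hsinβpos]
    have hjordan : 2 / π * β ≤ Real.sin β :=
      Real.mul_le_sin hβpos.le hβlt.le
    have hcos1 : Real.cos β ≤ 1 := Real.cos_le_one β
    have : (2:ℝ) ^ μ * (2 / π * β) ≤ 2 ^ μ * Real.sin β := by
      nlinarith [h2pow μ]
    have h2 : (2:ℝ) ^ μ * (2 / π * β) = 3 / 2 := by
      have e : (2:ℝ) ^ μ * (2 / π * β) = 2 / π * (β * 2 ^ μ) := by ring
      rw [e, hβmul]
      field_simp
      ring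
    linarith
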